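/- Fix q ∈ [0,1), ν ∈ [0,1), ᾱ > 0 and ρ ∈ (0,1), and let f be the tilted step distribution with parameters (q, ᾱ, ν, ρ). Set γ = (1−ρ)/(1−νρ), A = ᾱγ/(1+ᾱγ), A_q = qᾱγ/(1+qᾱγ), b = γ/(1−γ), b' = νγ/(1−νγ), μ = (A − A_q)/(b − b') and σ = A² − A_q² + (A − A_q)(b + b'). Then the second moment of f satisfies Σ_{n∈ℕ} n²·f(n) = μ² + σ/(b − b')²; equivalently, the variance of f equals σ/(b − b')². -/

import Mathlib

/-- The step distribution with parameters `(q, ᾱ, ν)`: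
`p(0) = 1 − ᾱ(1−q)/(1+ᾱ)` and
`p(n) = (ᾱ(1−q)(1−ν)/(1+ᾱ)²)·((ν+ᾱ)/(1+ᾱ))^{n−1}` for `n ≥ 1`. -/
noncomputable def stepDist (q a ν : ℝ) : ℕ → ℝ := fun n =>
  if n = 0 then 1 - a * (1 - q) / (1 + a)
  else (a * (1 - q) * (1 - ν) / (1 + a) ^ 2) * ((ν + a) / (1 + a)) ^ (n - 1)

/-- The tilted step distribution with parameters `(q, ᾱ, ν, ρ)`:
`f(n) = λ ρ^n p(n)` where `γ = (1−ρ)/(1−νρ)` and `λ = (1+ᾱγ)/(1+qᾱγ)`. -/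
noncomputable def tiltedStepDist (q a ν ρ : ℝ) : ℕ → ℝ := fun n =>
  ((1 + a * ((1 - ρ) / (1 - ν * ρ))) / (1 + q * a * ((1 - ρ) / (1 - ν * ρ)))) *
    ρ ^ n * stepDist q a ν n

set_option maxHeartbeats 1000000 in
private lemma aux_second_moment (q ν a ρ : ℝ)
    (hνρ' : (1:ℝ) - ν * ρ ≠ 0) (hν' : (1:ℝ) - ν ≠ 0) (h1a' : (1:ℝ) + a ≠ 0)
    (hρ'' : ρ ≠ 0)
    (hD' : (1:ℝ) - ν * ρ + a * (1 - ρ) ≠ 0) (hDq' : (1:ℝ) - ν * ρ + q * a * (1 - ρ) ≠ 0)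
    (hρν' : ρ * (1 - ν) ≠ 0) (h1ρ' : (1:ℝ) - ρ ≠ 0) :
    (1 - ν * ρ + a * (1 - ρ)) / (1 - ν * ρ + q * a * (1 - ρ)) * ρ *
      (a * (1 - q) * (1 - ν) / (1 + a) ^ 2) *
      (2 * (1 / ((1 - ν * ρ + a * (1 - ρ)) / (1 + a)) ^ 3)
        - 1 / ((1 - ν * ρ + a * (1 - ρ)) / (1 + a)) ^ 2)
    = (a * (1 - ρ) / (1 - ν * ρ + a * (1 - ρ)) - q * a * (1 - ρ) / (1 - ν * ρ + q * a * (1 - ρ)))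
      * (2 * (a * (1 - ρ) / (1 - ν * ρ + a * (1 - ρ))) + (1 - ρ) / (ρ * (1 - ν))
          + ν * (1 - ρ) / (1 - ν))
      / ((1 - ρ) / (ρ * (1 - ν)) - ν * (1 - ρ) / (1 - ν)) ^ 2 := by
  set D : ℝ := 1 - ν * ρ + a * (1 - ρ) with hD
  set Dq : ℝ := 1 - ν * ρ + q * a * (1 - ρ) with hDq
  have e1 : 1 / (D / (1 + a)) ^ 3 = (1 + a) ^ 3 / D ^ 3 := by
    rw [div_pow, one_div_div]
  have e2 : 1 / (D / (1 + a)) ^ 2 = (1 + a) ^ 2 / D ^ 2 := by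
    rw [div_pow, one_div_div]
  have hL : D / Dq * ρ * (a * (1 - q) * (1 - ν) / (1 + a) ^ 2) *
      (2 * (1 / (D / (1 + a)) ^ 3) - 1 / (D / (1 + a)) ^ 2)
      = a * ρ * (1 - q) * (1 - ν) * (1 + ν * ρ + a * (1 + ρ)) / (Dq * D ^ 2) := by
    rw [e1, e2]
    field_simp
    ring
  have hAmAq : a * (1 - ρ) / D - q * a * (1 - ρ) / Dq
      = a * (1 - ρ) * (1 - q) * (1 - ν * ρ) / (D * Dq) := by
    field_simp
    ring
  have hbb2 : (1 - ρ) / (ρ * (1 - ν)) - ν * (1 - ρ) / (1 - ν)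
      = (1 - ρ) * (1 - ν * ρ) / (ρ * (1 - ν)) := by
    field_simp
  have h2A : 2 * (a * (1 - ρ) / D) + (1 - ρ) / (ρ * (1 - ν)) + ν * (1 - ρ) / (1 - ν)
      = (1 - ρ) * (1 - ν * ρ) * (1 + ν * ρ + a * (1 + ρ)) / (D * (ρ * (1 - ν))) := by
    field_simp
    ring
  rw [hL, hAmAq, h2A, hbb2, div_mul_div_comm, div_pow, div_div_div_eq,
    div_eq_div_iff (by positivity) (by positivity)]
  ring

set_option maxHeartbeats 2000000 in
/-- With `γ = (1−ρ)/(1−νρ)`, `A = ᾱγ/(1+ᾱγ)`, `A_q = qᾱγ/(1+qᾱγ)`,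
`b = γ/(1−γ)`, `b' = νγ/(1−νγ)`, `μ = (A − A_q)/(b − b')` and
`σ = A² − A_q² + (A − A_q)(b + b')`, the second moment of the tilted step distribution
equals `μ² + σ/(b − b')²`. -/
theorem tiltedStepDist_second_moment (q ν a ρ γ A Aq b b' μ σ : ℝ)
    (hq0 : 0 ≤ q) (hq1 : q < 1) (hν0 : 0 ≤ ν) (hν1 : ν < 1) (ha : 0 < a)
    (hρ0 : 0 < ρ) (hρ1 : ρ < 1)
    (hγ : γ = (1 - ρ) / (1 - ν * ρ))
    (hA : A = a * γ / (1 + a * γ)) (hAq : Aq = q * a * γ / (1 + q * a * γ))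
    (hb : b = γ / (1 - γ)) (hb' : b' = ν * γ / (1 - ν * γ))
    (hμ : μ = (A - Aq) / (b - b'))
    (hσ : σ = A ^ 2 - Aq ^ 2 + (A - Aq) * (b + b')) :
    (∑' n : ℕ, (n : ℝ) ^ 2 * tiltedStepDist q a ν ρ n) = μ ^ 2 + σ / (b - b') ^ 2 := by
  have hνρ : 0 < 1 - ν * ρ := by nlinarith
  have hν1' : 0 < 1 - ν := by linarith
  have hρ' : 0 < 1 - ρ := by linarith
  have h1a : 0 < 1 + a := by linarith
  have hγpos : 0 < γ := by rw [hγ]; positivity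
  have hγ1 : γ < 1 := by rw [hγ, div_lt_one hνρ]; nlinarith
  have h1γ : 0 < 1 - γ := by linarith
  have hνγ : 0 < 1 - ν * γ := by nlinarith
  have haγ : 0 < 1 + a * γ := by positivity
  have hqaγ : 0 < 1 + q * a * γ := by positivity
  have hbb' : b - b' = γ * (1 - ν) / ((1 - γ) * (1 - ν * γ)) := by
    rw [hb, hb', div_sub_div _ _ h1γ.ne' hνγ.ne']; congr 1; ring
  have hbbpos : 0 < b - b' := by rw [hbb']; positivity
  set x : ℝ := ρ * ((ν + a) / (1 + a)) with hx
  have hx0 : 0 ≤ x := by rw [hx]; positivity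
  have hx1 : x < 1 := by
    rw [hx, ← mul_div_assoc, div_lt_one h1a]; nlinarith
  have hxn : ‖x‖ < 1 := by rw [Real.norm_eq_abs, abs_of_nonneg hx0]; exact hx1
  have h1x : 0 < 1 - x := by linarith
  have h2 := hasSum_choose_mul_geometric_of_norm_lt_one 2 hxn
  have h1 := hasSum_choose_mul_geometric_of_norm_lt_one 1 hxn
  have hsq : HasSum (fun n : ℕ => ((n : ℝ) + 1) ^ 2 * x ^ n)
      (2 * (1 / (1 - x) ^ 3) - 1 / (1 - x) ^ 2) := by
    have h := (h2.mul_left 2).sub h1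
    have hfun : (fun n : ℕ => ((n : ℝ) + 1) ^ 2 * x ^ n)
        = fun n : ℕ => 2 * ((((n + 2).choose 2 : ℕ) : ℝ) * x ^ n)
          - (((n + 1).choose 1 : ℕ) : ℝ) * x ^ n := by
      funext n
      have hch : 2 * ((n + 2).choose 2) = (n + 2) * (n + 1) := by
        rw [Nat.choose_two_right]
        have hdvd : 2 ∣ (n + 2) * (n + 2 - 1) := by
          show 2 ∣ (n + 2) * (n + 1)
          rw [Nat.mul_comm]
          exact (Nat.even_mul_succ_self (n + 1)).two_dvd
        calc 2 * ((n + 2) * (n + 2 - 1) / 2) = (n + 2) * (n + 2 - 1) :=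
              Nat.mul_div_cancel' hdvd
          _ = (n + 2) * (n + 1) := rfl
      have hc2 : 2 * (((n + 2).choose 2 : ℕ) : ℝ) = ((n : ℝ) + 2) * ((n : ℝ) + 1) := by
        exact_mod_cast congrArg (Nat.cast : ℕ → ℝ) hch
      rw [Nat.choose_one_right]
      push_cast
      linear_combination (-(ρ * ((ν + a) / (1 + a))) ^ n) * hc2
    rw [hfun]
    exact h
  set c : ℝ := ((1 + a * ((1 - ρ) / (1 - ν * ρ))) / (1 + q * a * ((1 - ρ) / (1 - ν * ρ)))) *
      ρ * (a * (1 - q) * (1 - ν) / (1 + a) ^ 2) with hc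
  have heq : (fun n : ℕ => (((n + 1 : ℕ)) : ℝ) ^ 2 * tiltedStepDist q a ν ρ (n + 1))
      = fun n : ℕ => c * (((n : ℝ) + 1) ^ 2 * x ^ n) := by
    funext n
    simp only [tiltedStepDist, stepDist, Nat.add_sub_cancel, if_neg (Nat.succ_ne_zero n)]
    push_cast
    rw [hc, hx, mul_pow]
    ring
  have h2sum : HasSum (fun n : ℕ => (((n + 1 : ℕ)) : ℝ) ^ 2 * tiltedStepDist q a ν ρ (n + 1))
      (c * (2 * (1 / (1 - x) ^ 3) - 1 / (1 - x) ^ 2)) := heq ▸ (hsq.mul_left c)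
  have hfull : HasSum (fun n : ℕ => (n : ℝ) ^ 2 * tiltedStepDist q a ν ρ n)
      (c * (2 * (1 / (1 - x) ^ 3) - 1 / (1 - x) ^ 2)) := by
    have h := (hasSum_nat_add_iff (f := fun n : ℕ => (n : ℝ) ^ 2 * tiltedStepDist q a ν ρ n) 1).mp h2sum
    simpa using h
  rw [hfull.tsum_eq]
  have hbbne : b - b' ≠ 0 := ne_of_gt hbbpos
  have hνρ' : (1:ℝ) - ν * ρ ≠ 0 := ne_of_gt hνρ
  have hρν1 : (1:ℝ) - ρ * ν ≠ 0 := by rw [mul_comm]; exact hνρ'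
  have hν' : (1:ℝ) - ν ≠ 0 := ne_of_gt hν1'
  have h1a' : (1:ℝ) + a ≠ 0 := ne_of_gt h1a
  have hρ'' : ρ ≠ 0 := ne_of_gt hρ0
  have h1ρ' : (1:ℝ) - ρ ≠ 0 := ne_of_gt hρ'
  have hρν' : ρ * (1 - ν) ≠ 0 := by positivity
  have hρν2 : ρ - ρ * ν ≠ 0 := by
    have : (0:ℝ) < ρ - ρ * ν := by nlinarith
    exact ne_of_gt this
  have hD : (0:ℝ) < 1 - ν * ρ + a * (1 - ρ) := by nlinarith
  have hDq : (0:ℝ) < 1 - ν * ρ + q * a * (1 - ρ) := by nlinarith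
  have hD' : (1:ℝ) - ν * ρ + a * (1 - ρ) ≠ 0 := ne_of_gt hD
  have hDq' : (1:ℝ) - ν * ρ + q * a * (1 - ρ) ≠ 0 := ne_of_gt hDq
  have haγ' : (1:ℝ) + a * ((1 - ρ) / (1 - ν * ρ)) ≠ 0 := by
    rw [← hγ]; exact ne_of_gt haγ
  have hqaγ' : (1:ℝ) + q * a * ((1 - ρ) / (1 - ν * ρ)) ≠ 0 := by
    rw [← hγ]; exact ne_of_gt hqaγ
  have h1γ' : (1:ℝ) - (1 - ρ) / (1 - ν * ρ) ≠ 0 := by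
    rw [← hγ]; exact ne_of_gt h1γ
  have hνγ' : (1:ℝ) - ν * ((1 - ρ) / (1 - ν * ρ)) ≠ 0 := by
    rw [← hγ]; exact ne_of_gt hνγ
  have hRHS : μ ^ 2 + σ / (b - b') ^ 2 = (A - Aq) * (2 * A + b + b') / (b - b') ^ 2 := by
    rw [hμ, hσ]; field_simp; try ring
  have hAf : A = a * (1 - ρ) / (1 - ν * ρ + a * (1 - ρ)) := by
    rw [hA, hγ]; field_simp; try ring
  have hAqf : Aq = q * a * (1 - ρ) / (1 - ν * ρ + q * a * (1 - ρ)) := by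
    rw [hAq, hγ]; field_simp; try ring
  have hbf : b = (1 - ρ) / (ρ * (1 - ν)) := by
    rw [hb, hγ, div_eq_div_iff h1γ' hρν']
    field_simp
    try ring
    try tauto
  have hb'f : b' = ν * (1 - ρ) / (1 - ν) := by
    rw [hb', hγ, div_eq_div_iff hνγ' hν']
    field_simp
    try ring
    try tauto
  have h1xf : (1:ℝ) - x = (1 - ν * ρ + a * (1 - ρ)) / (1 + a) := by
    rw [hx]; field_simp; try ring
  have hcf : c = (1 - ν * ρ + a * (1 - ρ)) / (1 - ν * ρ + q * a * (1 - ρ)) * ρ *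
      (a * (1 - q) * (1 - ν) / (1 + a) ^ 2) := by
    rw [hc]; field_simp; try ring
  rw [hRHS, hAf, hAqf, hbf, hb'f, hcf, h1xf]
  exact aux_second_moment q ν a ρ hνρ' hν' h1a' hρ'' hD' hDq' hρν' h1ρ'
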